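/- Let x_0 = (1/3, 1/3, …, 1/3) ∈ ℝ^9 and let X^{(iii)} ⊆ ℝ^9 be the set of the 72 vectors having one coordinate equal to 4/3, seven coordinates equal to 1/3, and one coordinate equal to −2/3. Then: (a) for every y ∈ H(9,3) \ J̃(9,3), the union J̃(9,3) ∪ {y} is a three-distance set if and only if y ∈ {x_0} ∪ X^{(iii)}; (b) d(x_0, y) = √2 for every y ∈ X^{(iii)}; and (c) for every y ∈ X^{(iii)}, the vector y' = 2x_0 − y also belongs to X^{(iii)} and d(y, y') = 2√2. -/

import Mathlib

noncomputable section

/-- The set of distances between distinct points of `S`. -/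
def distSet {n : ℕ} (S : Set (EuclideanSpace ℝ (Fin n))) : Set ℝ :=
  {d | ∃ x ∈ S, ∃ y ∈ S, x ≠ y ∧ d = dist x y}

/-- `S` is an `s`-distance set: exactly `s` distances occur between distinct points. -/
def IsSDistanceSet {n : ℕ} (s : ℕ) (S : Set (EuclideanSpace ℝ (Fin n))) : Prop :=
  (distSet S).Finite ∧ (distSet S).ncard = s

/-- The representation `J̃(n,m)` of the Johnson graph `J(n,m)`: vectors with exactly `m`
coordinates equal to `1` and the rest equal to `0`. -/
def JohnsonRep (n m : ℕ) : Set (EuclideanSpace ℝ (Fin n)) :=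
  {x | (∀ i, x i = 0 ∨ x i = 1) ∧ {i : Fin n | x i = 1}.ncard = m}

/-- The hyperplane `H(n,m) = {x : ∑ x_i = m}`. -/
def Hyp (n m : ℕ) : Set (EuclideanSpace ℝ (Fin n)) :=
  {x | ∑ i, x i = (m : ℝ)}

/-- The set `X⁽ⁱⁱⁱ⁾ = (4/3, (1/3)^7, -2/3)^P ⊆ ℝ⁹`. -/
def X93 : Set (EuclideanSpace ℝ (Fin 9)) :=
  {y | {i : Fin 9 | y i = 4/3}.ncard = 1 ∧ {i : Fin 9 | y i = 1/3}.ncard = 7 ∧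
    {i : Fin 9 | y i = -2/3}.ncard = 1}

open Finset

abbrev E9 := EuclideanSpace ℝ (Fin 9)


/-- indicator vector of a finset -/
def ind (T : Finset (Fin 9)) : E9 := WithLp.toLp 2 (fun i => if i ∈ T then (1:ℝ) else 0)

lemma dist_sq_eq (x y : E9) : dist x y ^ 2 = ∑ i, (x i - y i)^2 := by
  have h : ∑ i, dist (x i) (y i) ^ 2 = ∑ i, (x i - y i)^2 := by
    simp [Real.dist_eq, sq_abs]
  rw [EuclideanSpace.dist_eq, h, Real.sq_sqrt (by positivity)]

lemma ind_mem_J {T : Finset (Fin 9)} (hT : T.card = 3) : ind T ∈ JohnsonRep 9 3 := by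
  constructor
  · intro i
    by_cases h : i ∈ T <;> simp [ind, h]
  · have h : {i : Fin 9 | ind T i = 1} = ↑T := by
      ext i; by_cases h : i ∈ T <;> simp [ind, h]
    rw [h, Set.ncard_coe_finset, hT]

lemma J_char {x : E9} (hx : x ∈ JohnsonRep 9 3) :
    ∃ T : Finset (Fin 9), T.card = 3 ∧ x = ind T := by
  classical
  obtain ⟨h1, h2⟩ := hx
  refine ⟨Finset.univ.filter (fun i => x i = 1), ?_, ?_⟩
  · have h : {i : Fin 9 | x i = 1} = ↑(Finset.univ.filter (fun i => x i = 1)) := by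
      ext i; simp
    rw [h, Set.ncard_coe_finset] at h2; exact_mod_cast h2
  · ext i
    by_cases h : x i = 1
    · simp [ind, h]
    · rcases h1 i with h0 | h1'
      · simp [ind, h, h0]
      · exact absurd h1' h

lemma dist_sq_ind (y : E9) {T : Finset (Fin 9)} (hT : T.card = 3) :
    dist y (ind T) ^ 2 = (∑ i, (y i)^2) - 2 * (∑ i ∈ T, y i) + 3 := by
  classical
  rw [dist_sq_eq]
  have h1 : ∀ i, (y i - ind T i)^2 = (y i)^2 - 2 * (if i ∈ T then y i else 0)
      + (if i ∈ T then (1:ℝ) else 0) := by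
    intro i; by_cases h : i ∈ T <;> simp [ind, h] <;> ring
  rw [Finset.sum_congr rfl fun i _ => h1 i]
  rw [Finset.sum_add_distrib, Finset.sum_sub_distrib, ← Finset.mul_sum,
    Finset.sum_ite_mem, Finset.sum_ite_mem]
  simp [hT]

lemma dist_sq_ind_ind {T T' : Finset (Fin 9)} (hT : T.card = 3) (hT' : T'.card = 3) :
    dist (ind T) (ind T') ^ 2 = 6 - 2 * ((T ∩ T').card : ℝ) := by
  classical
  rw [dist_sq_ind (ind T) hT']
  have h1 : ∑ i, (ind T i)^2 = 3 := by
    have : ∀ i, (ind T i)^2 = (if i ∈ T then (1:ℝ) else 0) := by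
      intro i; by_cases h : i ∈ T <;> simp [ind, h]
    rw [Finset.sum_congr rfl fun i _ => this i, Finset.sum_ite_mem, Finset.univ_inter,
      Finset.sum_const, hT]
    norm_num
  have h2 : ∑ i ∈ T', ind T i = ((T ∩ T').card : ℝ) := by
    rw [show (∑ i ∈ T', ind T i) = ∑ i ∈ T', (if i ∈ T then (1:ℝ) else 0) from rfl,
      Finset.sum_ite_mem]
    rw [Finset.sum_const, Finset.inter_comm]
    norm_num
  rw [h1, h2]; ring



/-- the good distance set -/
def G : Set ℝ := {Real.sqrt 2, 2, Real.sqrt 6}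

lemma sqrt2_sq : Real.sqrt 2 ^ 2 = 2 := Real.sq_sqrt (by norm_num)
lemma sqrt6_sq : Real.sqrt 6 ^ 2 = 6 := Real.sq_sqrt (by norm_num)

lemma mem_G_iff {d : ℝ} (hd : 0 ≤ d) : d ∈ G ↔ d^2 = 2 ∨ d^2 = 4 ∨ d^2 = 6 := by
  constructor
  · rintro (rfl | rfl | rfl)
    · exact Or.inl sqrt2_sq
    · exact Or.inr (Or.inl (by norm_num))
    · exact Or.inr (Or.inr sqrt6_sq)
  · rintro (h | h | h)
    · have : d = Real.sqrt 2 := by rw [← Real.sqrt_sq hd, h]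
      simp [G, this]
    · have : d = 2 := by nlinarith
      simp [G, this]
    · have : d = Real.sqrt 6 := by rw [← Real.sqrt_sq hd, h]
      simp [G, this]

lemma G_ncard : G.ncard = 3 := by
  rw [Set.ncard_eq_three]
  refine ⟨_, _, _, ?_, ?_, ?_, rfl⟩
  · intro h; have := sqrt2_sq; rw [h] at this; norm_num at this
  · intro h; have h2 := sqrt2_sq; rw [h] at h2; rw [sqrt6_sq] at h2; norm_num at h2
  · intro h; have := sqrt6_sq; rw [← h] at this; norm_num at this

lemma J_finite : (JohnsonRep 9 3).Finite := by
  apply Set.Finite.subset (Set.finite_range ind)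
  intro x hx
  obtain ⟨T, -, rfl⟩ := J_char hx
  exact Set.mem_range_self T

lemma distSet_J_sub : distSet (JohnsonRep 9 3) ⊆ G := by
  rintro d ⟨x, hx, y, hy, hxy, rfl⟩
  classical
  obtain ⟨T, hT, rfl⟩ := J_char hx
  obtain ⟨T', hT', rfl⟩ := J_char hy
  rw [mem_G_iff dist_nonneg, dist_sq_ind_ind hT hT']
  have hTT' : T ≠ T' := fun h => hxy (by rw [h])
  have hle : (T ∩ T').card ≤ 2 := by
    by_contra h
    push_neg at h
    have h3 : (T ∩ T').card = 3 := le_antisymm (by rw [← hT]; exact card_le_card inter_subset_left) h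
    have e1 : T ∩ T' = T := Finset.eq_of_subset_of_card_le inter_subset_left (by omega)
    have e2 : T ∩ T' = T' := Finset.eq_of_subset_of_card_le inter_subset_right (by omega)
    exact hTT' (e1.symm.trans e2)
  interval_cases h : (T ∩ T').card <;> [right;right;left] <;> norm_num [h]

lemma ind_ne_of_intercard {T T' : Finset (Fin 9)} (hT : T.card = 3) (hT' : T'.card = 3)
    (h : (T ∩ T').card ≠ 3) : ind T ≠ ind T' := by
  intro he
  have := dist_sq_ind_ind hT hT'
  rw [he, dist_self] at this
  have : ((T ∩ T').card : ℝ) = 3 := by linarith [this]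
  exact_mod_cast h (by exact_mod_cast this)

lemma mem_distSet_J {T T' : Finset (Fin 9)} (hT : T.card = 3) (hT' : T'.card = 3)
    (h : (T ∩ T').card ≠ 3) : dist (ind T) (ind T') ∈ distSet (JohnsonRep 9 3) :=
  ⟨ind T, ind_mem_J hT, ind T', ind_mem_J hT', ind_ne_of_intercard hT hT' h, rfl⟩

lemma G_sub_distSet_J : G ⊆ distSet (JohnsonRep 9 3) := by
  classical
  have h2 : dist (ind {0,1,2}) (ind {0,1,3}) ∈ distSet (JohnsonRep 9 3) :=
    mem_distSet_J (by decide) (by decide) (by decide)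
  have h4 : dist (ind {0,1,2}) (ind {0,3,4}) ∈ distSet (JohnsonRep 9 3) :=
    mem_distSet_J (by decide) (by decide) (by decide)
  have h6 : dist (ind {0,1,2}) (ind {3,4,5}) ∈ distSet (JohnsonRep 9 3) :=
    mem_distSet_J (by decide) (by decide) (by decide)
  have e2 : dist (ind ({0,1,2} : Finset (Fin 9))) (ind {0,1,3}) = Real.sqrt 2 := by
    have h := dist_sq_ind_ind (T := ({0,1,2} : Finset (Fin 9))) (T' := {0,1,3}) (by decide) (by decide)
    rw [show (({0,1,2} : Finset (Fin 9)) ∩ {0,1,3}).card = 2 from by decide] at h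
    rw [← Real.sqrt_sq (dist_nonneg (x := ind ({0,1,2} : Finset (Fin 9))) (y := ind {0,1,3})), h]
    norm_num
  have e4 : dist (ind ({0,1,2} : Finset (Fin 9))) (ind {0,3,4}) = 2 := by
    have h := dist_sq_ind_ind (T := ({0,1,2} : Finset (Fin 9))) (T' := {0,3,4}) (by decide) (by decide)
    rw [show (({0,1,2} : Finset (Fin 9)) ∩ {0,3,4}).card = 1 from by decide] at h
    norm_num at h
    nlinarith [dist_nonneg (x := ind ({0,1,2} : Finset (Fin 9))) (y := ind {0,3,4}),
      sq_nonneg (dist (ind ({0,1,2} : Finset (Fin 9))) (ind {0,3,4}) - 2)]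
  have e6 : dist (ind ({0,1,2} : Finset (Fin 9))) (ind {3,4,5}) = Real.sqrt 6 := by
    have h := dist_sq_ind_ind (T := ({0,1,2} : Finset (Fin 9))) (T' := {3,4,5}) (by decide) (by decide)
    rw [show (({0,1,2} : Finset (Fin 9)) ∩ {3,4,5}).card = 0 from by decide] at h
    rw [← Real.sqrt_sq (dist_nonneg (x := ind ({0,1,2} : Finset (Fin 9))) (y := ind {3,4,5})), h]
    norm_num
  rintro d (rfl | rfl | rfl)
  · rw [← e2]; exact h2
  · rw [← e4]; exact h4
  · rw [← e6]; exact h6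

lemma distSet_J : distSet (JohnsonRep 9 3) = G :=
  Set.Subset.antisymm distSet_J_sub G_sub_distSet_J



lemma distSet_finite {S : Set E9} (hS : S.Finite) : (distSet S).Finite := by
  apply Set.Finite.subset (Set.Finite.image2 dist hS hS)
  rintro d ⟨x, hx, y, hy, -, rfl⟩
  exact Set.mem_image2_of_mem hx hy

lemma distSet_union_singleton {y : E9} (hy : y ∉ JohnsonRep 9 3) :
    distSet (JohnsonRep 9 3 ∪ {y}) =
      distSet (JohnsonRep 9 3) ∪ {d | ∃ x ∈ JohnsonRep 9 3, d = dist y x} := by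
  ext d
  constructor
  · rintro ⟨u, hu, w, hw, huw, rfl⟩
    rcases hu with hu | hu <;> rcases hw with hw | hw
    · exact Or.inl ⟨u, hu, w, hw, huw, rfl⟩
    · rw [Set.mem_singleton_iff] at hw; subst hw
      exact Or.inr ⟨u, hu, (dist_comm u w).symm ▸ rfl⟩
    · rw [Set.mem_singleton_iff] at hu; subst hu
      exact Or.inr ⟨w, hw, rfl⟩
    · rw [Set.mem_singleton_iff] at hu hw
      exact absurd (hu.trans hw.symm) huw
  · rintro (⟨u, hu, w, hw, huw, rfl⟩ | ⟨x, hx, rfl⟩)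
    · exact ⟨u, Or.inl hu, w, Or.inl hw, huw, rfl⟩
    · exact ⟨y, Or.inr rfl, x, Or.inl hx, fun h => hy (h ▸ hx), rfl⟩

/-- Master criterion. -/
lemma crit {y : E9} (hy : y ∉ JohnsonRep 9 3) :
    IsSDistanceSet 3 (JohnsonRep 9 3 ∪ {y}) ↔
      ∀ T : Finset (Fin 9), T.card = 3 →
        ((∑ i, (y i)^2) - 2 * (∑ i ∈ T, y i) + 3 = 2 ∨
         (∑ i, (y i)^2) - 2 * (∑ i ∈ T, y i) + 3 = 4 ∨
         (∑ i, (y i)^2) - 2 * (∑ i ∈ T, y i) + 3 = 6) := by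
  have hGfin : G.Finite := (Set.finite_singleton _).insert _ |>.insert _
  constructor
  · rintro ⟨hfin, hcard⟩ T hT
    have hsub : G ⊆ distSet (JohnsonRep 9 3 ∪ {y}) := by
      rw [← distSet_J]
      rintro d ⟨u, hu, w, hw, huw, rfl⟩
      exact ⟨u, Or.inl hu, w, Or.inl hw, huw, rfl⟩
    have heq : G = distSet (JohnsonRep 9 3 ∪ {y}) :=
      Set.eq_of_subset_of_ncard_le hsub (by rw [hcard, G_ncard]) hfin
    have hd : dist y (ind T) ∈ distSet (JohnsonRep 9 3 ∪ {y}) := by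
      refine ⟨y, Or.inr rfl, ind T, Or.inl (ind_mem_J hT), fun h => hy (h ▸ ind_mem_J hT), rfl⟩
    rw [← heq, mem_G_iff dist_nonneg, dist_sq_ind y hT] at hd
    exact hd
  · intro h
    have heq : distSet (JohnsonRep 9 3 ∪ {y}) = G := by
      rw [distSet_union_singleton hy]
      apply Set.Subset.antisymm
      · rintro d (hd | ⟨x, hx, rfl⟩)
        · rw [← distSet_J]; exact hd
        · obtain ⟨T, hT, rfl⟩ := J_char hx
          rw [mem_G_iff dist_nonneg, dist_sq_ind y hT]
          exact h T hT
      · intro d hd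
        exact Or.inl (distSet_J ▸ hd)
    constructor
    · rw [heq]; exact hGfin
    · rw [heq]; exact G_ncard



lemma ncard_univ_diff_pair {i j : Fin 9} (hij : i ≠ j) :
    (Set.univ \ {i, j} : Set (Fin 9)).ncard = 7 := by
  classical
  have h : (Set.univ \ {i, j} : Set (Fin 9)) = ↑((Finset.univ : Finset (Fin 9)) \ {i, j}) := by
    ext k; simp
  rw [h, Set.ncard_coe_finset, Finset.card_sdiff_of_subset (Finset.subset_univ _)]
  rw [Finset.card_pair hij]
  rfl

lemma X93_struct {y : E9} (hy : y ∈ X93) :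
    ∃ i j : Fin 9, i ≠ j ∧ y i = 4/3 ∧ y j = -2/3 ∧
      ∀ k, k ≠ i → k ≠ j → y k = 1/3 := by
  obtain ⟨h4, h1, hm⟩ := hy
  obtain ⟨i, hi⟩ := Set.ncard_eq_one.mp h4
  obtain ⟨j, hj⟩ := Set.ncard_eq_one.mp hm
  have hyi : y i = 4/3 := by
    have : i ∈ {k : Fin 9 | y k = 4/3} := by rw [hi]; rfl
    exact this
  have hyj : y j = -2/3 := by
    have : j ∈ {k : Fin 9 | y k = -2/3} := by rw [hj]; rfl
    exact this
  have hij : i ≠ j := by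
    intro h; rw [h, hyj] at hyi; norm_num at hyi
  refine ⟨i, j, hij, hyi, hyj, ?_⟩
  have hsub : {k : Fin 9 | y k = 1/3} ⊆ Set.univ \ {i, j} := by
    intro k hk
    refine ⟨trivial, ?_⟩
    rintro (rfl | rfl)
    · rw [Set.mem_setOf_eq, hyi] at hk; norm_num at hk
    · rw [Set.mem_setOf_eq, hyj] at hk; norm_num at hk
  have heq : {k : Fin 9 | y k = 1/3} = Set.univ \ {i, j} := by
    exact Set.eq_of_subset_of_ncard_le hsub (by rw [h1, ncard_univ_diff_pair hij])
  intro k hki hkj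
  have : k ∈ Set.univ \ ({i, j} : Set (Fin 9)) := ⟨trivial, by simp [hki, hkj]⟩
  rw [← heq] at this
  exact this

lemma X93_of {y : E9} (i j : Fin 9) (hij : i ≠ j) (hi : y i = 4/3) (hj : y j = -2/3)
    (ho : ∀ k, k ≠ i → k ≠ j → y k = 1/3) : y ∈ X93 := by
  have e4 : {k : Fin 9 | y k = 4/3} = {i} := by
    ext k
    simp only [Set.mem_setOf_eq, Set.mem_singleton_iff]
    constructor
    · intro h
      by_contra hk
      by_cases hk2 : k = j
      · rw [hk2, hj] at h; norm_num at h
      · rw [ho k hk hk2] at h; norm_num at h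
    · rintro rfl; exact hi
  have em : {k : Fin 9 | y k = -2/3} = {j} := by
    ext k
    simp only [Set.mem_setOf_eq, Set.mem_singleton_iff]
    constructor
    · intro h
      by_contra hk
      by_cases hk2 : k = i
      · rw [hk2, hi] at h; norm_num at h
      · rw [ho k hk2 hk] at h; norm_num at h
    · rintro rfl; exact hj
  have e1 : {k : Fin 9 | y k = 1/3} = Set.univ \ {i, j} := by
    ext k
    simp only [Set.mem_setOf_eq, Set.mem_diff, Set.mem_univ, true_and, Set.mem_insert_iff,
      Set.mem_singleton_iff]
    constructor
    · intro h
      push_neg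
      constructor
      · rintro rfl; rw [hi] at h; norm_num at h
      · rintro rfl; rw [hj] at h; norm_num at h
    · intro h
      push_neg at h
      exact ho k h.1 h.2
  refine ⟨by rw [e4]; simp, by rw [e1]; exact ncard_univ_diff_pair hij, by rw [em]; simp⟩

/-- sum of a function over univ, split at two points i ≠ j -/
lemma sum_split {f : Fin 9 → ℝ} {i j : Fin 9} (hij : i ≠ j) :
    ∑ k, f k = f i + f j + ∑ k ∈ Finset.univ \ {i, j}, f k := by
  classical
  rw [← Finset.sum_sdiff (Finset.subset_univ ({i, j} : Finset (Fin 9))), Finset.sum_pair hij]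
  ring

lemma X93_Q {y : E9} (hy : y ∈ X93) : ∑ i, (y i)^2 = 3 := by
  obtain ⟨i, j, hij, hi, hj, ho⟩ := X93_struct hy
  rw [sum_split (f := fun k => (y k)^2) hij]
  have h : ∑ k ∈ Finset.univ \ {i, j}, (y k)^2 = ∑ k ∈ Finset.univ \ {i, j}, (1/9 : ℝ) := by
    apply Finset.sum_congr rfl
    intro k hk
    simp only [Finset.mem_sdiff, Finset.mem_insert, Finset.mem_singleton] at hk
    push_neg at hk
    rw [ho k hk.2.1 hk.2.2]; norm_num
  rw [h, Finset.sum_const, hi, hj]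
  rw [show (Finset.univ \ {i, j} : Finset (Fin 9)).card = 7 by
    rw [Finset.card_sdiff_of_subset (Finset.subset_univ _), Finset.card_pair hij]; rfl]
  norm_num

lemma X93_sum {y : E9} (hy : y ∈ X93) : ∑ i, y i = 3 := by
  obtain ⟨i, j, hij, hi, hj, ho⟩ := X93_struct hy
  rw [sum_split (f := fun k => y k) hij]
  have h : ∑ k ∈ Finset.univ \ {i, j}, y k = ∑ k ∈ Finset.univ \ {i, j}, (1/3 : ℝ) := by
    apply Finset.sum_congr rfl
    intro k hk
    simp only [Finset.mem_sdiff, Finset.mem_insert, Finset.mem_singleton] at hk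
    push_neg at hk
    exact ho k hk.2.1 hk.2.2
  rw [h, Finset.sum_const, hi, hj]
  rw [show (Finset.univ \ {i, j} : Finset (Fin 9)).card = 7 by
    rw [Finset.card_sdiff_of_subset (Finset.subset_univ _), Finset.card_pair hij]; rfl]
  norm_num



lemma smul_sub_apply (x0 y : E9) (k : Fin 9) : ((2:ℝ) • x0 - y) k = 2 * x0 k - y k := by
  simp

-- σ_T values for y ∈ X93
lemma X93_sigma {y : E9} (hy : y ∈ X93) {T : Finset (Fin 9)} (hT : T.card = 3) :
    ∑ k ∈ T, y k = 0 ∨ ∑ k ∈ T, y k = 1 ∨ ∑ k ∈ T, y k = 2 := by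
  classical
  obtain ⟨i, j, hij, hi, hj, ho⟩ := X93_struct hy
  by_cases hiT : i ∈ T <;> by_cases hjT : j ∈ T
  · -- both
    have hsub : ({i, j} : Finset (Fin 9)) ⊆ T := by
      intro k hk; rcases Finset.mem_insert.mp hk with rfl | hk
      · exact hiT
      · rw [Finset.mem_singleton] at hk; exact hk ▸ hjT
    have h := Finset.sum_sdiff (f := fun k => y k) hsub
    have hrest : ∑ k ∈ T \ {i, j}, y k = ∑ k ∈ T \ {i, j}, (1/3 : ℝ) := by
      apply Finset.sum_congr rfl
      intro k hk
      simp only [Finset.mem_sdiff, Finset.mem_insert, Finset.mem_singleton] at hk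
      push_neg at hk
      exact ho k hk.2.1 hk.2.2
    have hcard : (T \ ({i, j} : Finset (Fin 9))).card = 1 := by
      rw [Finset.card_sdiff_of_subset hsub, Finset.card_pair hij, hT]
    rw [← h, hrest, Finset.sum_const, hcard, Finset.sum_pair hij, hi, hj]
    right; left; norm_num
  · -- i only
    have hsub : ({i} : Finset (Fin 9)) ⊆ T := Finset.singleton_subset_iff.mpr hiT
    have h := Finset.sum_sdiff (f := fun k => y k) hsub
    have hrest : ∑ k ∈ T \ {i}, y k = ∑ k ∈ T \ {i}, (1/3 : ℝ) := by
      apply Finset.sum_congr rfl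
      intro k hk
      simp only [Finset.mem_sdiff, Finset.mem_singleton] at hk
      exact ho k hk.2 (fun h' => hjT (h' ▸ hk.1))
    have hcard : (T \ ({i} : Finset (Fin 9))).card = 2 := by
      rw [Finset.card_sdiff_of_subset hsub, Finset.card_singleton, hT]
    rw [← h, hrest, Finset.sum_const, hcard, Finset.sum_singleton, hi]
    right; right; norm_num
  · -- j only
    have hsub : ({j} : Finset (Fin 9)) ⊆ T := Finset.singleton_subset_iff.mpr hjT
    have h := Finset.sum_sdiff (f := fun k => y k) hsub
    have hrest : ∑ k ∈ T \ {j}, y k = ∑ k ∈ T \ {j}, (1/3 : ℝ) := by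
      apply Finset.sum_congr rfl
      intro k hk
      simp only [Finset.mem_sdiff, Finset.mem_singleton] at hk
      exact ho k (fun h' => hiT (h' ▸ hk.1)) hk.2
    have hcard : (T \ ({j} : Finset (Fin 9))).card = 2 := by
      rw [Finset.card_sdiff_of_subset hsub, Finset.card_singleton, hT]
    rw [← h, hrest, Finset.sum_const, hcard, Finset.sum_singleton, hj]
    left; norm_num
  · -- neither
    have hrest : ∑ k ∈ T, y k = ∑ k ∈ T, (1/3 : ℝ) := by
      apply Finset.sum_congr rfl
      intro k hk
      exact ho k (fun h' => hiT (h' ▸ hk)) (fun h' => hjT (h' ▸ hk))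
    rw [hrest, Finset.sum_const, hT]
    right; left; norm_num

lemma dist_x0_X93 {x0 y : E9} (hx0 : ∀ i, x0 i = 1/3) (hy : y ∈ X93) :
    dist x0 y = Real.sqrt 2 := by
  obtain ⟨i, j, hij, hi, hj, ho⟩ := X93_struct hy
  have hsq : dist x0 y ^ 2 = 2 := by
    rw [dist_sq_eq, sum_split (f := fun k => (x0 k - y k)^2) hij]
    have hrest : ∑ k ∈ Finset.univ \ {i, j}, (x0 k - y k)^2
        = ∑ k ∈ Finset.univ \ {i, j}, (0 : ℝ) := by
      apply Finset.sum_congr rfl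
      intro k hk
      simp only [Finset.mem_sdiff, Finset.mem_insert, Finset.mem_singleton] at hk
      push_neg at hk
      rw [hx0 k, ho k hk.2.1 hk.2.2]; norm_num
    rw [hrest, Finset.sum_const, hx0 i, hx0 j, hi, hj]
    norm_num
  rw [← Real.sqrt_sq (dist_nonneg (x := x0) (y := y)), hsq]

lemma X93_refl {x0 y : E9} (hx0 : ∀ i, x0 i = 1/3) (hy : y ∈ X93) :
    (2 : ℝ) • x0 - y ∈ X93 ∧ dist y ((2 : ℝ) • x0 - y) = 2 * Real.sqrt 2 := by
  obtain ⟨i, j, hij, hi, hj, ho⟩ := X93_struct hy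
  constructor
  · apply X93_of j i hij.symm
    · rw [smul_sub_apply, hx0, hj]; norm_num
    · rw [smul_sub_apply, hx0, hi]; norm_num
    · intro k hkj hki
      rw [smul_sub_apply, hx0, ho k hki hkj]; norm_num
  · have hsq : dist y ((2 : ℝ) • x0 - y) ^ 2 = 8 := by
      rw [dist_sq_eq, sum_split (f := fun k => (y k - ((2:ℝ) • x0 - y) k)^2) hij]
      have hrest : ∑ k ∈ Finset.univ \ {i, j}, (y k - ((2:ℝ) • x0 - y) k)^2
          = ∑ k ∈ Finset.univ \ {i, j}, (0 : ℝ) := by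
        apply Finset.sum_congr rfl
        intro k hk
        simp only [Finset.mem_sdiff, Finset.mem_insert, Finset.mem_singleton] at hk
        push_neg at hk
        rw [smul_sub_apply, hx0, ho k hk.2.1 hk.2.2]; norm_num
      rw [hrest, Finset.sum_const, smul_sub_apply, smul_sub_apply, hx0 i, hx0 j, hi, hj]
      norm_num
    rw [← Real.sqrt_sq (dist_nonneg (x := y) (y := ((2:ℝ) • x0 - y))), hsq]
    rw [show (8:ℝ) = (2 * Real.sqrt 2)^2 by
      rw [mul_pow, Real.sq_sqrt] <;> norm_num]
    rw [Real.sqrt_sq (by positivity)]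



lemma classify {y : E9} (hsum : ∑ i, y i = 3)
    (hcond : ∀ T : Finset (Fin 9), T.card = 3 →
      ((∑ i, (y i)^2) - 2 * (∑ i ∈ T, y i) + 3 = 2 ∨
       (∑ i, (y i)^2) - 2 * (∑ i ∈ T, y i) + 3 = 4 ∨
       (∑ i, (y i)^2) - 2 * (∑ i ∈ T, y i) + 3 = 6)) :
    (∀ i, y i = 1/3) ∨ y ∈ X93 := by
  classical
  set Q := ∑ i, (y i)^2 with hQdef
  obtain ⟨i0, -, hmin⟩ := Finset.exists_min_image Finset.univ y ⟨0, Finset.mem_univ 0⟩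
  set v := y i0 with hvdef
  -- pairwise differences are integers in [-2,2]
  have hdiff : ∀ i j : Fin 9, i ≠ j →
      (y i - y j = -2 ∨ y i - y j = -1 ∨ y i - y j = 0 ∨ y i - y j = 1 ∨ y i - y j = 2) := by
    intro i j hij
    obtain ⟨S, hSsub, hScard⟩ := Finset.exists_subset_card_eq (s := Finset.univ \ {i, j}) (n := 2) (by
      rw [Finset.card_sdiff_of_subset (Finset.subset_univ _), Finset.card_pair hij]
      simp)
    have hiS : i ∉ S := fun h => by
      have := hSsub h
      simp at this
    have hjS : j ∉ S := fun h => by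
      have := hSsub h
      simp at this
    have hT1 : (insert i S).card = 3 := by rw [Finset.card_insert_of_notMem hiS, hScard]
    have hT2 : (insert j S).card = 3 := by rw [Finset.card_insert_of_notMem hjS, hScard]
    have h1 := hcond _ hT1
    have h2 := hcond _ hT2
    rw [Finset.sum_insert hiS] at h1
    rw [Finset.sum_insert hjS] at h2
    rcases h1 with h1 | h1 | h1 <;> rcases h2 with h2 | h2 | h2 <;>
      first
      | exact Or.inl (by linarith)
      | exact Or.inr (Or.inl (by linarith))
      | exact Or.inr (Or.inr (Or.inl (by linarith)))
      | exact Or.inr (Or.inr (Or.inr (Or.inl (by linarith))))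
      | exact Or.inr (Or.inr (Or.inr (Or.inr (by linarith))))
  -- every coordinate is v, v+1, or v+2
  have hd : ∀ i, y i = v ∨ y i = v + 1 ∨ y i = v + 2 := by
    intro i
    by_cases h : i = i0
    · left; rw [h]
    · have hge : v ≤ y i := hmin i (Finset.mem_univ i)
      rcases hdiff i i0 h with h' | h' | h' | h' | h'
      · exfalso; linarith
      · exfalso; linarith
      · left; linarith
      · right; left; linarith
      · right; right; linarith
  set A := Finset.univ.filter (fun i => y i = v) with hAdef
  set B := Finset.univ.filter (fun i => y i = v + 1) with hBdef
  set C := Finset.univ.filter (fun i => y i = v + 2) with hCdef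
  have hmemA : ∀ i, i ∈ A ↔ y i = v := by intro i; simp [hAdef]
  have hmemB : ∀ i, i ∈ B ↔ y i = v + 1 := by intro i; simp [hBdef]
  have hmemC : ∀ i, i ∈ C ↔ y i = v + 2 := by intro i; simp [hCdef]
  have hdAB : Disjoint A B := by
    rw [Finset.disjoint_left]
    intro i hiA hiB
    rw [hmemA] at hiA; rw [hmemB] at hiB; linarith
  have hdAC : Disjoint A C := by
    rw [Finset.disjoint_left]
    intro i hiA hiC
    rw [hmemA] at hiA; rw [hmemC] at hiC; linarith
  have hdBC : Disjoint B C := by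
    rw [Finset.disjoint_left]
    intro i hiB hiC
    rw [hmemB] at hiB; rw [hmemC] at hiC; linarith
  have hABC : A ∪ B ∪ C = Finset.univ := by
    apply Finset.eq_univ_of_forall
    intro i
    rcases hd i with h | h | h
    · exact Finset.mem_union_left _ (Finset.mem_union_left _ ((hmemA i).mpr h))
    · exact Finset.mem_union_left _ (Finset.mem_union_right _ ((hmemB i).mpr h))
    · exact Finset.mem_union_right _ ((hmemC i).mpr h)
  set a := A.card with hadef
  set b := B.card with hbdef
  set c := C.card with hcdef
  have habc : a + b + c = 9 := by
    rw [hadef, hbdef, hcdef,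
      ← Finset.card_union_of_disjoint hdAB,
      ← Finset.card_union_of_disjoint (Finset.disjoint_union_left.mpr ⟨hdAC, hdBC⟩),
      hABC]
    simp
  have ha1 : 1 ≤ a := by
    rw [hadef]
    refine Finset.card_pos.mpr ⟨i0, ?_⟩
    rw [hmemA]
  have hsplitsum : ∀ f : Fin 9 → ℝ,
      ∑ i, f i = ∑ i ∈ A, f i + ∑ i ∈ B, f i + ∑ i ∈ C, f i := by
    intro f
    rw [← hABC, Finset.sum_union (Finset.disjoint_union_left.mpr ⟨hdAC, hdBC⟩),
      Finset.sum_union hdAB]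
  have hsumy : (a:ℝ) * v + (b:ℝ) * (v+1) + (c:ℝ) * (v+2) = 3 := by
    have h := hsplitsum y
    rw [hsum] at h
    have hA : ∑ i ∈ A, y i = (a:ℝ) * v := by
      rw [Finset.sum_congr rfl (fun i hi => (hmemA i).mp hi), Finset.sum_const,
        nsmul_eq_mul]
    have hB : ∑ i ∈ B, y i = (b:ℝ) * (v+1) := by
      rw [Finset.sum_congr rfl (fun i hi => (hmemB i).mp hi), Finset.sum_const,
        nsmul_eq_mul]
    have hC : ∑ i ∈ C, y i = (c:ℝ) * (v+2) := by
      rw [Finset.sum_congr rfl (fun i hi => (hmemC i).mp hi), Finset.sum_const,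
        nsmul_eq_mul]
    rw [hA, hB, hC] at h
    linarith
  have hcast : (a:ℝ) + b + c = 9 := by exact_mod_cast habc
  have h9v : 9 * v = 3 - ((b:ℝ) + 2*c) := by linear_combination hsumy - v * hcast
  have hQeq : Q = 9*v^2 + 2*v*((b:ℝ) + 2*c) + ((b:ℝ) + 4*c) := by
    have h := hsplitsum (fun i => (y i)^2)
    have hA : ∑ i ∈ A, (y i)^2 = (a:ℝ) * v^2 := by
      rw [Finset.sum_congr rfl (fun i hi => by rw [(hmemA i).mp hi]), Finset.sum_const,
        nsmul_eq_mul]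
    have hB : ∑ i ∈ B, (y i)^2 = (b:ℝ) * (v+1)^2 := by
      rw [Finset.sum_congr rfl (fun i hi => by rw [(hmemB i).mp hi]), Finset.sum_const,
        nsmul_eq_mul]
    have hC : ∑ i ∈ C, (y i)^2 = (c:ℝ) * (v+2)^2 := by
      rw [Finset.sum_congr rfl (fun i hi => by rw [(hmemC i).mp hi]), Finset.sum_const,
        nsmul_eq_mul]
    rw [hA, hB, hC] at h
    rw [← hQdef] at h
    linear_combination h + v^2 * hcast
  -- key construction
  have key : ∀ n1 n2 n3 : ℕ, n1 + n2 + n3 = 3 → n1 ≤ a → n2 ≤ b → n3 ≤ c →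
      (Q - 2*(3*v + (n2:ℝ) + 2*(n3:ℝ)) + 3 = 2 ∨
       Q - 2*(3*v + (n2:ℝ) + 2*(n3:ℝ)) + 3 = 4 ∨
       Q - 2*(3*v + (n2:ℝ) + 2*(n3:ℝ)) + 3 = 6) := by
    intro n1 n2 n3 hn h1 h2 h3
    obtain ⟨TA, hTAsub, hTAcard⟩ := Finset.exists_subset_card_eq (s := A) (n := n1) h1
    obtain ⟨TB, hTBsub, hTBcard⟩ := Finset.exists_subset_card_eq (s := B) (n := n2) h2
    obtain ⟨TC, hTCsub, hTCcard⟩ := Finset.exists_subset_card_eq (s := C) (n := n3) h3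
    have d1 : Disjoint TA TB := hdAB.mono hTAsub hTBsub
    have d2 : Disjoint TA TC := hdAC.mono hTAsub hTCsub
    have d3 : Disjoint TB TC := hdBC.mono hTBsub hTCsub
    have hTcard : (TA ∪ TB ∪ TC).card = 3 := by
      rw [Finset.card_union_of_disjoint (Finset.disjoint_union_left.mpr ⟨d2, d3⟩),
        Finset.card_union_of_disjoint d1, hTAcard, hTBcard, hTCcard, hn]
    have hσ : ∑ k ∈ TA ∪ TB ∪ TC, y k = (n1:ℝ)*v + (n2:ℝ)*(v+1) + (n3:ℝ)*(v+2) := by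
      rw [Finset.sum_union (Finset.disjoint_union_left.mpr ⟨d2, d3⟩),
        Finset.sum_union d1]
      have eA : ∑ k ∈ TA, y k = (n1:ℝ) * v := by
        rw [Finset.sum_congr rfl (fun i hi => (hmemA i).mp (hTAsub hi)), Finset.sum_const,
          hTAcard, nsmul_eq_mul]
      have eB : ∑ k ∈ TB, y k = (n2:ℝ) * (v+1) := by
        rw [Finset.sum_congr rfl (fun i hi => (hmemB i).mp (hTBsub hi)), Finset.sum_const,
          hTBcard, nsmul_eq_mul]
      have eC : ∑ k ∈ TC, y k = (n3:ℝ) * (v+2) := by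
        rw [Finset.sum_congr rfl (fun i hi => (hmemC i).mp (hTCsub hi)), Finset.sum_const,
          hTCcard, nsmul_eq_mul]
      rw [eA, eB, eC]
    have hnc : (n1:ℝ) + n2 + n3 = 3 := by exact_mod_cast hn
    have hσ' : ∑ k ∈ TA ∪ TB ∪ TC, y k = 3*v + (n2:ℝ) + 2*(n3:ℝ) := by
      linear_combination hσ + v * hnc
    have h := hcond _ hTcard
    rw [hσ'] at h
    exact h
  -- gap contradiction
  have gap : ∀ n1 n2 n3 m1 m2 m3 : ℕ, n1 + n2 + n3 = 3 → m1 + m2 + m3 = 3 →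
      n1 ≤ a → n2 ≤ b → n3 ≤ c → m1 ≤ a → m2 ≤ b → m3 ≤ c →
      n2 + 2*n3 + 3 ≤ m2 + 2*m3 → False := by
    intro n1 n2 n3 m1 m2 m3 hn hm hn1 hn2 hn3 hm1 hm2 hm3 hgap
    have h1 := key n1 n2 n3 hn hn1 hn2 hn3
    have h2 := key m1 m2 m3 hm hm1 hm2 hm3
    have hc : (n2:ℝ) + 2*(n3:ℝ) + 3 ≤ (m2:ℝ) + 2*(m3:ℝ) := by exact_mod_cast hgap
    rcases h1 with h1 | h1 | h1 <;> rcases h2 with h2 | h2 | h2 <;> linarith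
  -- divisibility
  have hdvd : ∀ n1 n2 n3 : ℕ, n1 + n2 + n3 = 3 → n1 ≤ a → n2 ≤ b → n3 ≤ c →
      3 ∣ (b + 2*c) := by
    intro n1 n2 n3 hn h1 h2 h3
    have hk := key n1 n2 n3 hn h1 h2 h3
    have hmain : ∃ k : ℕ, (k = 2 ∨ k = 4 ∨ k = 6) ∧
        ((3:ℝ) - ((b:ℝ) + 2*c))^2
          = 9*(((b:ℝ) + 4*c) + 3 - 2*((n2:ℝ) + 2*(n3:ℝ)) - (k:ℕ)) := by
      rcases hk with h | h | h
      · refine ⟨2, Or.inl rfl, ?_⟩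
        push_cast
        linear_combination 9 * hQeq + (9*v + ((b:ℝ) + 2*c) - 3) * h9v + (-9) * h
      · refine ⟨4, Or.inr (Or.inl rfl), ?_⟩
        push_cast
        linear_combination 9 * hQeq + (9*v + ((b:ℝ) + 2*c) - 3) * h9v + (-9) * h
      · refine ⟨6, Or.inr (Or.inr rfl), ?_⟩
        push_cast
        linear_combination 9 * hQeq + (9*v + ((b:ℝ) + 2*c) - 3) * h9v + (-9) * h
    obtain ⟨k, -, hk2⟩ := hmain
    have hZ : ((3:ℤ) - ((b:ℤ) + 2*c))^2 = 9*(((b:ℤ) + 4*c) + 3 - 2*((n2:ℤ) + 2*n3) - k) := by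
      have : (((3:ℤ) - ((b:ℤ) + 2*c))^2 : ℝ)
          = ((9*(((b:ℤ) + 4*c) + 3 - 2*((n2:ℤ) + 2*n3) - k) : ℤ) : ℝ) := by
        push_cast
        push_cast at hk2
        linarith
      exact_mod_cast this
    have h3 : (3:ℤ) ∣ ((3:ℤ) - ((b:ℤ) + 2*c)) := by
      apply Int.prime_three.dvd_of_dvd_pow (n := 2)
      exact ⟨3*(((b:ℤ) + 4*c) + 3 - 2*((n2:ℤ) + 2*n3) - k), by rw [hZ]; ring⟩
    have h3' : (3:ℤ) ∣ ((b:ℤ) + 2*c) := by omega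
    exact_mod_cast h3'
  -- case analysis
  rcases Nat.eq_zero_or_pos c with hc | hc
  · rcases Nat.eq_zero_or_pos b with hb | hb
    · -- all coordinates equal v, v = 1/3
      left
      have hAuniv : A = Finset.univ := Finset.eq_univ_of_card A (by rw [show Fintype.card (Fin 9) = 9 from rfl]; omega)
      have hv13 : v = 1/3 := by
        rw [hb, hc] at h9v
        push_cast at h9v
        linarith
      intro i
      rw [← hv13]
      exact (hmemA i).mp (hAuniv ▸ Finset.mem_univ i)
    · exfalso
      have h3b : 3 ∣ b + 2*c := by
        rcases le_or_gt 3 a with ha | ha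
        · exact hdvd 3 0 0 (by omega) (by omega) (by omega) (by omega)
        · exact hdvd 0 3 0 (by omega) (by omega) (by omega) (by omega)
      exact gap 3 0 0 0 3 0 (by omega) (by omega) (by omega) (by omega) (by omega)
        (by omega) (by omega) (by omega) (by omega)
  · rcases le_or_gt 3 a with ha3 | ha3
    · exfalso
      rcases Nat.eq_zero_or_pos b with hb | hb
      · rcases (show c = 1 ∨ 2 ≤ c by omega) with hc1 | hc2
        · have h3b := hdvd 3 0 0 (by omega) (by omega) (by omega) (by omega)
          omega
        · exact gap 3 0 0 1 0 2 (by omega) (by omega) (by omega) (by omega) (by omega)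
            (by omega) (by omega) (by omega) (by omega)
      · exact gap 3 0 0 1 1 1 (by omega) (by omega) (by omega) (by omega) (by omega)
          (by omega) (by omega) (by omega) (by omega)
    · rcases (show a = 1 ∨ a = 2 by omega) with ha | ha
      · -- a = 1, b + c = 8
        rcases (show (c = 1 ∧ b = 7) ∨ (2 ≤ c ∧ 2 ≤ b) ∨ (b = 1 ∧ c = 7) ∨ (b = 0 ∧ c = 8)
            by omega) with ⟨hc1, hb7⟩ | ⟨hc2, hb2⟩ | ⟨hb1, hc7⟩ | ⟨hb0, hc8⟩
        · -- the X93 case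
          right
          obtain ⟨i, hi⟩ := Finset.card_eq_one.mp hc1
          obtain ⟨j, hj⟩ := Finset.card_eq_one.mp ha
          have hv23 : v = -2/3 := by
            rw [hb7, hc1] at h9v
            push_cast at h9v
            linarith
          have hyi : y i = 4/3 := by
            have := (hmemC i).mp (hi ▸ Finset.mem_singleton_self i)
            rw [hv23] at this; linarith
          have hyj : y j = -2/3 := by
            have := (hmemA j).mp (hj ▸ Finset.mem_singleton_self j)
            rw [hv23] at this; linarith
          have hij : i ≠ j := by
            intro h; rw [h, hyj] at hyi; norm_num at hyi
          apply X93_of i j hij hyi hyj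
          intro k hki hkj
          rcases hd k with h | h | h
          · exfalso
            exact hkj (Finset.mem_singleton.mp (hj ▸ (hmemA k).mpr h))
          · rw [h, hv23]; norm_num
          · exfalso
            exact hki (Finset.mem_singleton.mp (hi ▸ (hmemC k).mpr h))
        · exact absurd (gap 1 2 0 0 1 2 (by omega) (by omega) (by omega) (by omega)
            (by omega) (by omega) (by omega) (by omega) (by omega)) id
        · exact absurd (gap 1 1 1 0 0 3 (by omega) (by omega) (by omega) (by omega)
            (by omega) (by omega) (by omega) (by omega) (by omega)) id
        · have h3b := hdvd 1 0 2 (by omega) (by omega) (by omega) (by omega)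
          omega
      · -- a = 2, b + c = 7, c ≥ 1
        exfalso
        rcases Nat.eq_zero_or_pos b with hb | hb
        · exact gap 2 0 1 0 0 3 (by omega) (by omega) (by omega) (by omega) (by omega)
            (by omega) (by omega) (by omega) (by omega)
        · rcases (show c = 1 ∨ 2 ≤ c by omega) with hc1 | hc2
          · exact gap 2 1 0 0 2 1 (by omega) (by omega) (by omega) (by omega) (by omega)
              (by omega) (by omega) (by omega) (by omega)
          · exact gap 2 1 0 0 1 2 (by omega) (by omega) (by omega) (by omega) (by omega)
              (by omega) (by omega) (by omega) (by omega)


theorem addable_vectors_J93 (x0 : EuclideanSpace ℝ (Fin 9)) (hx0 : ∀ i, x0 i = 1/3) :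
    (∀ y ∈ Hyp 9 3 \ JohnsonRep 9 3,
      (IsSDistanceSet 3 (JohnsonRep 9 3 ∪ {y}) ↔ (y = x0 ∨ y ∈ X93))) ∧
    (∀ y ∈ X93, dist x0 y = Real.sqrt 2) ∧
    (∀ y ∈ X93, (2 : ℝ) • x0 - y ∈ X93 ∧
      dist y ((2 : ℝ) • x0 - y) = 2 * Real.sqrt 2) := by
  refine ⟨?_, fun y hy => dist_x0_X93 hx0 hy, fun y hy => X93_refl hx0 hy⟩
  intro y hy
  obtain ⟨hyH, hyJ⟩ := hy
  rw [crit hyJ]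
  constructor
  · intro h
    have hsum : ∑ i, y i = 3 := by exact_mod_cast hyH
    rcases classify hsum h with h1 | h1
    · left; ext i; rw [h1 i, hx0 i]
    · right; exact h1
  · rintro (rfl | hX)
    · intro T hT
      have hQ : ∑ i, (y i)^2 = 1 := by
        rw [Finset.sum_congr rfl (fun i _ => by rw [hx0 i]), Finset.sum_const]
        norm_num
      have hσ : ∑ i ∈ T, y i = 1 := by
        rw [Finset.sum_congr rfl (fun i _ => hx0 i), Finset.sum_const, hT]
        norm_num
      left; rw [hQ, hσ]; norm_num
    · intro T hT
      have hQ := X93_Q hX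
      rcases X93_sigma hX hT with h | h | h
      · right; right; rw [hQ, h]; norm_num
      · right; left; rw [hQ, h]; norm_num
      · left; rw [hQ, h]; norm_num
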